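/- Let α > 0, let θ be a character of G of level N ≥ 1, and let x ∈ G. Then the function y ↦ F^{(α)}(y)·(θ(x·y^{−1}) − θ(x)) is μ-integrable on G and ∫_G F^{(α)}(y)·(θ(x·y^{−1}) − θ(x)) dμ(y) = q^{α·N·m_N}·θ(x). In other words, every nontrivial character of G is an eigenfunction of the fractional differentiation operator D^α with eigenvalue q^{α·N·m_N}, where N is its level. -/

import Mathlib

open MeasureTheory Filter Topology

/-- A (unitary) continuous character of a topological group, with values in `ℂ`. -/
def UnitaryCharacter (G : Type*) [Group G] [TopologicalSpace G] :=
  {θ : G → ℂ // Continuous θ ∧ (∀ a b : G, θ (a * b) = θ a * θ b) ∧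
    ∀ a : G, ‖θ a‖ = 1}

lemma stmt3_arith (q : ℕ) (hq : 2 ≤ q) (m : ℕ → ℕ) (hm1 : m 1 = 1)
    (α : ℝ) (c R : ℕ → ℝ)
    (hc0 : c 0 = -(q:ℝ)^α)
    (hcd : ∀ l : ℕ, c (l+1) = c l +
      ((q:ℝ) ^ (α * (((l+1) * m (l+1) : ℕ):ℝ)) - (q:ℝ) ^ (α * (((l+2) * m (l+2) : ℕ):ℝ)))
        * (q:ℝ) ^ ((l+1) * m (l+1)))
    (hR : ∀ n, R n = ((q:ℝ) ^ (n * m n))⁻¹) :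
    ∀ N : ℕ, 1 ≤ N →
    (∑ l ∈ Finset.range (N-1), c l * (R (l+1) - R l)) - c (N-1) * R (N-1)
      = (q:ℝ) ^ (α * ((N * m N : ℕ):ℝ)) := by
  have hq0 : (q:ℝ) ≠ 0 := by positivity
  intro N hN
  induction N, hN using Nat.le_induction with
  | base =>
      simp only [Nat.sub_self, Finset.range_zero, Finset.sum_empty, hc0, hR, hm1]
      norm_num
  | succ n hn ih =>
      obtain ⟨K, rfl⟩ : ∃ K, n = K + 1 := ⟨n - 1, (Nat.succ_pred_eq_of_pos hn).symm⟩
      simp only [Nat.add_sub_cancel] at ih ⊢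
      rw [Finset.sum_range_succ]
      have hpow : (q:ℝ) ^ ((K+1) * m (K+1)) ≠ 0 := pow_ne_zero _ hq0
      have hRK : R (K+1) = ((q:ℝ) ^ ((K+1) * m (K+1)))⁻¹ := hR _
      have key : ((q:ℝ) ^ (α * (((K+1) * m (K+1) : ℕ):ℝ)) - (q:ℝ) ^ (α * (((K+2) * m (K+2) : ℕ):ℝ)))
          * (q:ℝ) ^ ((K+1) * m (K+1)) * R (K+1)
          = (q:ℝ) ^ (α * (((K+1) * m (K+1) : ℕ):ℝ)) - (q:ℝ) ^ (α * (((K+2) * m (K+2) : ℕ):ℝ)) := by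
        rw [hRK]; field_simp
      have : (∑ l ∈ Finset.range K, c l * (R (l + 1) - R l)) + c K * (R (K + 1) - R K)
          - c (K + 1) * R (K + 1)
          = ((∑ l ∈ Finset.range K, c l * (R (l + 1) - R l)) - c K * R K)
            - (c (K+1) - c K) * R (K+1) := by ring
      rw [this, ih, hcd K]
      have h2 : K + 1 + 1 = K + 2 := rfl
      rw [h2] at *
      rw [show c K + ((q:ℝ) ^ (α * (((K+1) * m (K+1) : ℕ):ℝ)) - (q:ℝ) ^ (α * (((K+2) * m (K+2) : ℕ):ℝ))) * (q:ℝ) ^ ((K+1) * m (K+1)) - c K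
        = ((q:ℝ) ^ (α * (((K+1) * m (K+1) : ℕ):ℝ)) - (q:ℝ) ^ (α * (((K+2) * m (K+2) : ℕ):ℝ))) * (q:ℝ) ^ ((K+1) * m (K+1)) from by ring, key]
      ring

lemma char_setIntegral_zero {G : Type*} [CommGroup G] [TopologicalSpace G] [IsTopologicalGroup G]
    [CompactSpace G] [MeasurableSpace G] [BorelSpace G]
    (μ : Measure G) [μ.IsHaarMeasure] [IsProbabilityMeasure μ]
    (f : G → ℂ) (hmul : ∀ a b : G, f (a * b) = f a * f b)
    (S : Subgroup G) (hS : MeasurableSet (S : Set G)) (a : G) (ha : a ∈ S) (hfa : f a ≠ 1) :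
    ∫ y in (S : Set G), f y ∂μ = 0 := by
  set I := ∫ y in (S : Set G), f y ∂μ with hI
  have h1 : ∫ y, (S : Set G).indicator f y ∂μ = I := integral_indicator hS
  have h2 : ∫ y, (S : Set G).indicator f (a * y) ∂μ = ∫ y, (S : Set G).indicator f y ∂μ :=
    integral_mul_left_eq_self _ a
  have h3 : ∀ y, (S : Set G).indicator f (a * y) = f a * (S : Set G).indicator f y := by
    intro y
    by_cases hy : y ∈ (S : Set G)
    · rw [Set.indicator_of_mem (mul_mem ha hy), Set.indicator_of_mem hy, hmul]
    · rw [Set.indicator_of_notMem hy, Set.indicator_of_notMem, mul_zero]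
      intro hc
      exact hy (by simpa using mul_mem (inv_mem ha) hc)
  simp_rw [h3, integral_const_mul, h1] at h2
  have h4 : (f a - 1) * I = 0 := by rw [sub_mul, one_mul, h2, sub_self]
  exact (mul_eq_zero.mp h4).resolve_left (sub_ne_zero.mpr hfa)

/-- every character `θ` of level `N ≥ 1` is an eigenfunction of the
fractional differentiation operator `D^α` with eigenvalue `q^{α N m_N}`:
`∫_G F^{(α)}(y)(θ(x y⁻¹) − θ(x)) dμ(y) = q^{α N m_N} θ(x)`. -/
theorem stmt3
    (q : ℕ) (hq : 2 ≤ q)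
    (m : ℕ → ℕ) (hm0 : m 0 = 0) (hm1 : m 1 = 1)
    (hmgrow : ∀ n : ℕ, 1 ≤ n → 2 * m n ≤ m (n + 1))
    (G : Type*) [CommGroup G] [TopologicalSpace G] [IsTopologicalGroup G]
    [CompactSpace G] [MeasurableSpace G] [BorelSpace G]
    (μ : Measure G) [μ.IsHaarMeasure] [IsProbabilityMeasure μ]
    (V : ℕ → Subgroup G) (hVopen : ∀ n, IsOpen (V n : Set G))
    (hV0 : V 0 = ⊤) (hVdesc : ∀ n, V (n + 1) ≤ V n)
    (hVmeas : ∀ n, μ (V n : Set G) = ((q : ENNReal) ^ (n * m n))⁻¹)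
    (α : ℝ) (hα : 0 < α)
    (F : G → ℝ)
    (hF : ∀ l : ℕ, ∀ y ∈ (V l : Set G) \ (V (l + 1) : Set G),
      F y = -(q : ℝ) ^ α + ∑ n ∈ Finset.Icc 1 l,
        ((q : ℝ) ^ (α * ((n * m n : ℕ) : ℝ))
            - (q : ℝ) ^ (α * (((n + 1) * m (n + 1) : ℕ) : ℝ))) * (q : ℝ) ^ (n * m n))
    (hF0 : ∀ y ∈ ⋂ n : ℕ, (V n : Set G), F y = 0)
    (θ : UnitaryCharacter G) (N : ℕ) (hN : 1 ≤ N)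
    (hθtriv : ∀ y ∈ (V N : Set G), θ.1 y = 1)
    (hθnontriv : ∃ y ∈ (V (N - 1) : Set G), θ.1 y ≠ 1)
    (x : G) :
    Integrable (fun y : G => (F y : ℂ) * (θ.1 (x * y⁻¹) - θ.1 x)) μ ∧
    ∫ y : G, (F y : ℂ) * (θ.1 (x * y⁻¹) - θ.1 x) ∂μ
      = (((q : ℝ) ^ (α * ((N * m N : ℕ) : ℝ)) : ℝ) : ℂ) * θ.1 x := by
  classical
  obtain ⟨hcont, hmul, habs⟩ := θ.2
  have hq0 : (q:ℝ) ≠ 0 := by positivity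
  have hθ0 : ∀ y, θ.1 y ≠ 0 := by
    intro y h
    have := habs y
    rw [h] at this
    simp at this
  have hθ1 : θ.1 1 = 1 := by
    have h := hmul 1 1
    rw [one_mul] at h
    exact (mul_left_cancel₀ (hθ0 1) (by rw [← h, mul_one])).symm
  have hθinv : ∀ y : G, θ.1 y⁻¹ = (θ.1 y)⁻¹ := by
    intro y
    exact eq_inv_of_mul_eq_one_left (by rw [← hmul, inv_mul_cancel, hθ1])
  set φ : G → ℂ := fun y => θ.1 (x * y⁻¹) - θ.1 x with hφdef
  have hφ : ∀ y, φ y = θ.1 x * ((θ.1 y)⁻¹ - 1) := by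
    intro y
    simp only [hφdef, hmul, hθinv, mul_sub, mul_one]
  have hφcont : Continuous φ :=
    (hcont.comp (continuous_const.mul continuous_inv)).sub continuous_const
  have hφint : Integrable φ μ :=
    hφcont.integrable_of_hasCompactSupport (HasCompactSupport.of_compactSpace _)
  have hanti : Antitone V := antitone_nat_of_succ_le hVdesc
  have hVm : ∀ n, MeasurableSet (V n : Set G) := fun n => (hVopen n).measurableSet
  set c : ℕ → ℝ := fun l => -(q:ℝ)^α + ∑ n ∈ Finset.Icc 1 l,
      ((q : ℝ) ^ (α * ((n * m n : ℕ) : ℝ))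
          - (q : ℝ) ^ (α * (((n + 1) * m (n + 1) : ℕ) : ℝ))) * (q : ℝ) ^ (n * m n) with hcdef
  set R : ℕ → ℝ := fun n => ((q:ℝ) ^ (n * m n))⁻¹ with hRdef
  set Jc : ℕ → ℂ := fun n => ∫ y in (V n : Set G), φ y ∂μ with hJcdef
  have hc0 : c 0 = -(q:ℝ)^α := by simp [hcdef]
  have hcd : ∀ l : ℕ, c (l+1) = c l +
      ((q:ℝ) ^ (α * (((l+1) * m (l+1) : ℕ):ℝ)) - (q:ℝ) ^ (α * (((l+2) * m (l+2) : ℕ):ℝ)))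
        * (q:ℝ) ^ ((l+1) * m (l+1)) := by
    intro l
    simp only [hcdef]
    rw [Finset.sum_Icc_succ_top (by omega : 1 ≤ l + 1)]
    ring
  have hμR : ∀ n, (μ (V n : Set G)).toReal = R n := by
    intro n
    rw [hVmeas]
    simp [hRdef, ENNReal.toReal_inv, ENNReal.toReal_pow]
  -- integral over V N vanishes
  have hJN : Jc N = 0 := by
    simp only [hJcdef]
    rw [setIntegral_congr_fun (hVm N) (g := fun _ => (0:ℂ))]
    · simp
    · intro y hy
      rw [hφ y, hθtriv y hy, inv_one, sub_self, mul_zero]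
  -- integral over V l for l < N
  have hJ : ∀ l, l < N → Jc l = -((R l : ℝ) : ℂ) * θ.1 x := by
    intro l hl
    obtain ⟨a, haV, haθ⟩ := hθnontriv
    have haVl : a ∈ V l := hanti (by omega : l ≤ N - 1) haV
    have hzero : ∫ y in (V l : Set G), (θ.1 y)⁻¹ ∂μ = 0 := by
      apply char_setIntegral_zero μ (fun y => (θ.1 y)⁻¹)
        (fun a b => by show (θ.1 (a*b))⁻¹ = (θ.1 a)⁻¹ * (θ.1 b)⁻¹; rw [hmul, mul_inv]) (V l) (hVm l) a haVl
      rw [ne_eq, inv_eq_one]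
      exact haθ
    have hinvint : IntegrableOn (fun y => (θ.1 y)⁻¹) (V l : Set G) μ :=
      ((hcont.inv₀ hθ0).integrable_of_hasCompactSupport
        (HasCompactSupport.of_compactSpace _)).integrableOn
    simp only [hJcdef]
    calc ∫ y in (V l : Set G), φ y ∂μ
        = ∫ y in (V l : Set G), θ.1 x * ((θ.1 y)⁻¹ - 1) ∂μ := by
          exact setIntegral_congr_fun (hVm l) (fun y _ => hφ y)
      _ = θ.1 x * ∫ y in (V l : Set G), ((θ.1 y)⁻¹ - 1) ∂μ := integral_const_mul _ _
      _ = θ.1 x * ((∫ y in (V l : Set G), (θ.1 y)⁻¹ ∂μ) - ∫ y in (V l : Set G), (1:ℂ) ∂μ) := by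
          rw [integral_sub hinvint (integrableOn_const (measure_ne_top _ _))]
      _ = -((R l : ℝ) : ℂ) * θ.1 x := by
          rw [hzero, setIntegral_const, measureReal_def, hμR]
          simp [Complex.real_smul]
          ring
  -- the pointwise identity
  have hmeasA : ∀ l, MeasurableSet ((V l : Set G) \ (V (l+1) : Set G)) :=
    fun l => (hVm l).diff (hVm (l+1))
  have hkey : (fun y : G => (F y : ℂ) * φ y)
      = fun y => ∑ l ∈ Finset.range N,
          ((V l : Set G) \ (V (l+1) : Set G)).indicator (fun y => (c l : ℂ) * φ y) y := by
    funext y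
    by_cases hy : y ∈ (V N : Set G)
    · have hφ0 : φ y = 0 := by rw [hφ y, hθtriv y hy, inv_one, sub_self, mul_zero]
      rw [hφ0, mul_zero]
      symm
      refine Finset.sum_eq_zero fun j _ => ?_
      by_cases h : y ∈ (V j : Set G) \ (V (j+1) : Set G)
      · rw [Set.indicator_of_mem h, hφ0, mul_zero]
      · rw [Set.indicator_of_notMem h]
    · have hex : ∃ n, y ∉ (V n : Set G) := ⟨N, hy⟩
      have hk_spec : y ∉ (V (Nat.find hex) : Set G) := Nat.find_spec hex
      have hk_pos : 1 ≤ Nat.find hex := by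
        rcases Nat.eq_zero_or_pos (Nat.find hex) with h | h
        · exfalso
          apply hk_spec
          rw [h, hV0]
          trivial
        · exact h
      obtain ⟨l, hkl⟩ : ∃ l, Nat.find hex = l + 1 :=
        ⟨Nat.find hex - 1, (Nat.succ_pred_eq_of_pos hk_pos).symm⟩
      have hyl : y ∈ (V l : Set G) := by
        by_contra h
        exact Nat.find_min hex (by omega) h
      have hyl1 : y ∉ (V (l+1) : Set G) := hkl ▸ hk_spec
      have hlN : l < N := by
        have : Nat.find hex ≤ N := Nat.find_le hy
        omega
      have hFy : (F y : ℝ) = c l := hF l y ⟨hyl, hyl1⟩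
      rw [Finset.sum_eq_single_of_mem l (Finset.mem_range.mpr hlN)]
      · rw [Set.indicator_of_mem (show y ∈ (V l : Set G) \ (V (l+1) : Set G) from ⟨hyl, hyl1⟩), hFy]
      · intro j hj hjl
        apply Set.indicator_of_notMem
        rintro ⟨hj1, hj2⟩
        rcases lt_or_gt_of_ne hjl with h | h
        · exact hj2 (hanti (by omega : j + 1 ≤ l) hyl)
        · exact hyl1 (hanti (by omega : l + 1 ≤ j) hj1)
  have hintl : ∀ l, Integrable
      (((V l : Set G) \ (V (l+1) : Set G)).indicator (fun y => (c l : ℂ) * φ y)) μ :=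
    fun l => (hφint.const_mul _).indicator (hmeasA l)
  constructor
  · rw [show (fun y : G => (F y : ℂ) * (θ.1 (x * y⁻¹) - θ.1 x)) = fun y => (F y : ℂ) * φ y from rfl,
      hkey]
    exact integrable_finset_sum _ (fun l _ => hintl l)
  · have harith := stmt3_arith q hq m hm1 α c R hc0 hcd (fun n => rfl) N hN
    obtain ⟨M, hM⟩ : ∃ M, N = M + 1 := ⟨N - 1, (Nat.succ_pred_eq_of_pos hN).symm⟩
    have hJN' : Jc (M + 1) = 0 := hM ▸ hJN
    calc ∫ y : G, (F y : ℂ) * (θ.1 (x * y⁻¹) - θ.1 x) ∂μ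
        = ∫ y : G, ∑ l ∈ Finset.range N,
            ((V l : Set G) \ (V (l+1) : Set G)).indicator (fun y => (c l : ℂ) * φ y) y ∂μ := by
          rw [show (fun y : G => (F y : ℂ) * (θ.1 (x * y⁻¹) - θ.1 x))
            = fun y => (F y : ℂ) * φ y from rfl] at *
          rw [hkey]
      _ = ∑ l ∈ Finset.range N, (c l : ℂ) * (Jc l - Jc (l+1)) := by
          rw [integral_finset_sum _ (fun l _ => hintl l)]
          refine Finset.sum_congr rfl (fun l _ => ?_)
          rw [integral_indicator (hmeasA l), integral_const_mul,
            integral_diff (hVm (l+1)) hφint.integrableOn (hanti (by omega : l ≤ l + 1))]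
      _ = (((∑ l ∈ Finset.range M, c l * (R (l+1) - R l)) - c M * R M : ℝ) : ℂ) * θ.1 x := by
          rw [hM, Finset.sum_range_succ]
          rw [Finset.sum_congr rfl (fun l hl => by
            rw [hJ l (by have := Finset.mem_range.mp hl; omega),
              hJ (l+1) (by have := Finset.mem_range.mp hl; omega)])]
          rw [hJ M (by omega), hJN']
          push_cast
          rw [Finset.sum_congr rfl (fun l (_ : l ∈ Finset.range M) =>
            show ((c l : ℂ)) * (-(R l : ℂ) * θ.1 x - -(R (l+1) : ℂ) * θ.1 x)
              = ((c l : ℂ) * ((R (l+1) : ℂ) - (R l : ℂ))) * θ.1 x from by ring)]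
          rw [← Finset.sum_mul]
          ring
      _ = (((q : ℝ) ^ (α * ((N * m N : ℕ) : ℝ)) : ℝ) : ℂ) * θ.1 x := by
          rw [show M = N - 1 from by omega] at *
          rw [harith]
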